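/- For n ≥ 1, if (a_1,...,a_n) is a permutation of [n] all of whose left-to-right minima occur at odd positions, then the permutation of [n-1] obtained by deleting a_n and decrementing by 1 every entry greater than a_n also has all of its left-to-right minima at odd positions. Conversely, given a permutation of [n-1] with this property and a value a_n ∈ [n], the extension (inserting a_n at the end after incrementing larger entries) has the property if and only if n is odd, or n is even and a_n > 1. -/

import Mathlib

/-- `l` is a permutation of `[n] = {1, …, n}`, as a list. -/
def IsPermList (n : ℕ) (l : List ℕ) : Prop :=
  l.Perm ((List.range n).map (· + 1))

/-- All left-to-right minima of the list `l` occur at odd (1-indexed)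
positions: whenever `l[i] = min(l[0], …, l[i])`, the position `i+1` is odd. -/
def OddMinL (l : List ℕ) : Prop :=
  ∀ i, (h : i < l.length) →
    (∀ j, (hj : j < l.length) → j ≤ i → l[i]'h ≤ l[j]'hj) → Odd (i + 1)

private lemma mem_range_map (n x : ℕ) : x ∈ (List.range n).map (· + 1) ↔ 1 ≤ x ∧ x ≤ n := by
  simp only [List.mem_map, List.mem_range]
  constructor
  · rintro ⟨k, hk, rfl⟩; omega
  · rintro ⟨h1, h2⟩; exact ⟨x - 1, by omega, by omega⟩

private lemma range_map_nodup (n : ℕ) : ((List.range n).map (· + 1)).Nodup :=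
  List.nodup_range.map (fun _ _ h => by omega)

/-- strict monotonicity of the deletion map on entries `≠ a`. -/
private lemma f_lt (a x y : ℕ) (hx : x ≠ a) (hy : y ≠ a) (h : x < y) :
    (if a < x then x - 1 else x) < (if a < y then y - 1 else y) := by
  split_ifs <;> omega

private lemma g_lt (a x y : ℕ) (h : x < y) :
    (if a ≤ x then x + 1 else x) < (if a ≤ y then y + 1 else y) := by
  split_ifs <;> omega

/-- Deleting the last entry `a` and decrementing entries greater than `a`
preserves "all left-to-right minima at odd positions", and the extension of a
permutation of `[n-1]` by `a ∈ [n]` (incrementing entries `≥ a`) has the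
property iff `n` is odd or `a > 1`. -/
theorem delete_last_entry (n : ℕ) (hn : 1 ≤ n) :
    (∀ (l₀ : List ℕ) (a : ℕ), IsPermList n (l₀ ++ [a]) → OddMinL (l₀ ++ [a]) →
      IsPermList (n - 1) (l₀.map fun x => if a < x then x - 1 else x) ∧
      OddMinL (l₀.map fun x => if a < x then x - 1 else x)) ∧
    (∀ (l₀ : List ℕ) (a : ℕ), IsPermList (n - 1) l₀ → OddMinL l₀ →
      a ∈ Finset.Icc 1 n →
      (OddMinL ((l₀.map fun x => if a ≤ x then x + 1 else x) ++ [a]) ↔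
        (Odd n ∨ 1 < a))) := by
  constructor
  · -- deletion direction
    intro l₀ a hperm hodd
    have hlen : l₀.length + 1 = n := by
      have := hperm.length_eq; simpa using this
    have hmem : ∀ x ∈ l₀ ++ [a], 1 ≤ x ∧ x ≤ n := fun x hx =>
      (mem_range_map n x).mp (hperm.mem_iff.mp hx)
    have hnd : (l₀ ++ [a]).Nodup := hperm.nodup_iff.mpr (range_map_nodup n)
    have hnal : a ∉ l₀ := by
      have := (List.nodup_append'.mp hnd).2.2
      intro h; exact this h (by simp)
    have hmem₀ : ∀ x ∈ l₀, 1 ≤ x ∧ x ≤ n ∧ x ≠ a := by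
      intro x hx
      have h1 := hmem x (by simp [hx])
      refine ⟨h1.1, h1.2, ?_⟩
      rintro rfl; exact hnal hx
    constructor
    · -- IsPermList (n-1)
      have hnd₀ : l₀.Nodup := (List.nodup_append'.mp hnd).1
      refine (List.perm_ext_iff_of_nodup ?_ (range_map_nodup (n - 1))).mpr ?_
      · refine List.Nodup.map_on ?_ hnd₀
        intro x hx y hy hxy
        obtain ⟨hx1, hxn, hxa⟩ := hmem₀ x hx
        obtain ⟨hy1, hyn, hya⟩ := hmem₀ y hy
        by_contra hne
        rcases Nat.lt_or_ge x y with h | h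
        · exact absurd hxy (Nat.ne_of_lt (f_lt a x y hxa hya h))
        · have h' : y < x := by omega
          exact absurd hxy.symm (Nat.ne_of_lt (f_lt a y x hya hxa h'))
      · intro b
        obtain ⟨ha1, han⟩ := hmem a (by simp)
        rw [mem_range_map]
        constructor
        · rintro hb
          obtain ⟨x, hx, rfl⟩ := List.mem_map.mp hb
          obtain ⟨hx1, hxn, hxa⟩ := hmem₀ x hx
          split_ifs <;> omega
        · rintro ⟨hb1, hbn⟩
          -- preimage is g b = if a ≤ b then b + 1 else b
          set c := if a ≤ b then b + 1 else b with hc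
          have hca : c ≠ a := by simp only [hc]; split_ifs <;> omega
          have hc1 : 1 ≤ c ∧ c ≤ n := by
            simp only [hc]; split_ifs <;> omega
          have hcl : c ∈ l₀ := by
            have : c ∈ l₀ ++ [a] := hperm.mem_iff.mpr ((mem_range_map n c).mpr hc1)
            rcases List.mem_append.mp this with h | h
            · exact h
            · simp at h; exact absurd h hca
          refine List.mem_map.mpr ⟨c, hcl, ?_⟩
          simp only [hc]; split_ifs <;> omega
    · -- OddMinL
      intro i hi hmin
      have hi' : i < l₀.length := by simpa using hi
      have hiapp : i < (l₀ ++ [a]).length := by simp; omega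
      refine hodd i hiapp ?_
      intro j hj hji
      have hj' : j < l₀.length := by omega
      rw [List.getElem_append_left hi', List.getElem_append_left hj']
      have hjm : j < (l₀.map fun x => if a < x then x - 1 else x).length := by
        simpa using hj'
      have hle := hmin j hjm hji
      rw [List.getElem_map, List.getElem_map] at hle
      by_contra hlt
      push_neg at hlt
      obtain ⟨_, _, hia⟩ := hmem₀ _ (List.getElem_mem hi')
      obtain ⟨_, _, hja⟩ := hmem₀ _ (List.getElem_mem hj')
      exact absurd hle (by exact Nat.not_le_of_lt (f_lt a _ _ hja hia hlt))
  · -- extension direction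
    intro l₀ a hperm hodd ha
    have ha' : 1 ≤ a ∧ a ≤ n := by simpa using ha
    have hlen : l₀.length = n - 1 := by
      have := hperm.length_eq; simpa using this
    have hmem : ∀ x ∈ l₀, 1 ≤ x ∧ x ≤ n - 1 := fun x hx =>
      (mem_range_map (n - 1) x).mp (hperm.mem_iff.mp hx)
    set g : ℕ → ℕ := fun x => if a ≤ x then x + 1 else x with hg
    set L := (l₀.map g) ++ [a] with hL
    have hLlen : L.length = n := by simp [hL, hlen]; omega
    have hlast : ∀ {w : l₀.length < L.length}, L[l₀.length] = a := by
      intro w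
      exact List.getElem_concat_length (by simp) w
    have hget : ∀ j, (h : j < l₀.length) → ∀ {w : j < L.length},
        L[j]'w = g (l₀[j]'h) := by
      intro j h w
      show ((l₀.map g) ++ [a])[j]'w = _
      rw [List.getElem_append_left (by simpa using h), List.getElem_map]
    constructor
    · -- forward: OddMinL L → Odd n ∨ 1 < a
      intro hOdd
      by_contra hc
      push_neg at hc
      obtain ⟨hnotodd, hale⟩ := hc
      have ha1 : a = 1 := by omega
      have hiL : l₀.length < L.length := by simp [hL]
      have hminh : ∀ j, (hj : j < L.length) → j ≤ l₀.length →
          L[l₀.length]'hiL ≤ L[j]'hj := by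
        intro j hj hji
        rw [hlast]
        rcases Nat.lt_or_ge j l₀.length with h | h
        · rw [hget j h]
          have := hmem _ (List.getElem_mem h)
          simp only [hg]; split_ifs <;> omega
        · have hje : j = l₀.length := by omega
          subst hje
          rw [hlast]
      have hres := hOdd l₀.length hiL hminh
      rw [show l₀.length + 1 = n by omega] at hres
      exact hnotodd hres
    · -- backward
      intro h i hi hmin
      rcases Nat.lt_or_ge i l₀.length with hil | hil
      · -- interior index: reflect through g
        have hil' : i < (l₀.map g).length := by simpa using hil
        refine hodd i hil ?_
        intro j hj hji
        have hj' : j < (l₀.map g).length := by simpa using hj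
        have hjL : j < L.length := by simp [hL]; omega
        have hle := hmin j hjL hji
        rw [hget i hil, hget j hj] at hle
        by_contra hlt
        push_neg at hlt
        exact absurd hle (Nat.not_le_of_lt (g_lt a _ _ hlt))
      · -- last index
        have hie : i = l₀.length := by
          have : i < L.length := hi
          simp [hL] at this; omega
        subst hie
        rcases h with hOdd | hagt
        · have : l₀.length + 1 = n := by omega
          rw [this]; exact hOdd
        · -- 1 < a : if n = 1 trivial, else contradiction with entry 1
          by_cases hn1 : n = 1
          · have : l₀.length = 0 := by omega
            rw [this]; exact odd_one
          · exfalso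
            have h1l : (1 : ℕ) ∈ l₀ :=
              hperm.mem_iff.mpr ((mem_range_map (n - 1) 1).mpr ⟨le_refl _, by omega⟩)
            obtain ⟨j, hjl, hj1⟩ := List.mem_iff_getElem.mp h1l
            have hjL : j < L.length := by simp [hL]; omega
            have hle := hmin j hjL (by omega)
            rw [hlast, hget j hjl, hj1] at hle
            have : g 1 = 1 := by simp only [hg]; split_ifs <;> omega
            omega
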